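/- Let C = AᵀA, and for |T| = s let k_max = max over T of λ_max(A_TᵀA_T) and k_min = min over T of λ_min(A_TᵀA_T). Then there exist indices h, l such that c_hh − k_min ≤ (s−1)·max_{j≠h}|c_hj| and k_max − c_ll ≤ (s−1)·max_{j≠l}|c_lj|. -/

import Mathlib

open Matrix

theorem Matrix.isHermitian_transpose_mul_self {m n α : Type*} [Fintype m] [CommRing α]
    [StarRing α] [TrivialStar α] (A : Matrix m n α) : (Aᵀ * A).IsHermitian := by
  simpa [conjTranspose_eq_transpose_of_trivial] using isHermitian_conjTranspose_mul_self A

lemma gersh_aux {ι : Type*} [Fintype ι] [DecidableEq ι] [Nonempty ι]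
    (B : Matrix ι ι ℝ) (hB : B.IsHermitian) (μ : ℝ) (hμ : μ ∈ Set.range hB.eigenvalues) :
    ∃ k, |μ - B k k| ≤ ∑ j ∈ Finset.univ.erase k, |B k j| := by
  obtain ⟨i, rfl⟩ := hμ
  have hsp : hB.eigenvalues i ∈ spectrum ℝ (Matrix.toLin' B) := by
    have := hB.eigenvalues_mem_spectrum_real i
    rwa [← AlgEquiv.spectrum_eq (Matrix.toLinAlgEquiv' (R := ℝ) (n := ι)) B] at this
  have hev := Module.End.HasEigenvalue.of_mem_spectrum hsp
  obtain ⟨k, hk⟩ := eigenvalue_mem_ball hev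
  refine ⟨k, ?_⟩
  rw [Metric.mem_closedBall, Real.dist_eq] at hk
  simpa only [Real.norm_eq_abs] using hk

lemma gersh_sub {n m s : ℕ} (hs : 1 ≤ s)
    (A : Matrix (Fin n) (Fin m) ℝ)
    (C : Matrix (Fin m) (Fin m) ℝ) (hC : C = Aᵀ * A)
    (cmax : Fin m → ℝ)
    (hcmax_ub : ∀ i, ∀ j ≠ i, |C i j| ≤ cmax i)
    (T : Finset (Fin m)) (hT : T.card = s) (μ : ℝ)
    (hμ : μ ∈ Set.range
      (isHermitian_transpose_mul_self
        (A.submatrix id (fun i : {j // j ∈ T} => i.1))).eigenvalues) :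
    ∃ h : Fin m, |μ - C h h| ≤ ((s : ℝ) - 1) * cmax h := by
  have hTne : T.Nonempty := Finset.card_pos.mp (hT ▸ hs)
  have : Nonempty {j // j ∈ T} := ⟨⟨hTne.choose, hTne.choose_spec⟩⟩
  set B := (A.submatrix id (fun i : {j // j ∈ T} => i.1))ᵀ *
      (A.submatrix id (fun i : {j // j ∈ T} => i.1)) with hB
  have hBC : ∀ i j : {j // j ∈ T}, B i j = C i.1 j.1 := by
    intro i j
    simp [hB, hC, Matrix.mul_apply, Matrix.submatrix, Matrix.transpose_apply]
  obtain ⟨k, hk⟩ := gersh_aux B (isHermitian_transpose_mul_self _) μ hμ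
  refine ⟨k.1, ?_⟩
  rw [hBC k k] at hk
  refine hk.trans ?_
  have hsum : ∑ j ∈ Finset.univ.erase k, |B k j| ≤
      (Finset.univ.erase k).card • cmax k.1 := by
    refine Finset.sum_le_card_nsmul _ _ _ ?_
    intro j hj
    rw [hBC]
    exact hcmax_ub k.1 j.1 (fun hjk => (Finset.mem_erase.mp hj).1 (Subtype.ext hjk))
  have hcard : (Finset.univ.erase k).card = s - 1 := by
    rw [Finset.card_erase_of_mem (Finset.mem_univ k), Finset.card_univ,
      Fintype.card_coe, hT]
  rw [hcard] at hsum
  refine hsum.trans_eq ?_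
  rw [nsmul_eq_mul, Nat.cast_sub hs, Nat.cast_one]

/-- Lemma 2: with `k_max`, `k_min` the extremal eigenvalues over all `s`-column
Gram submatrices `A_TᵀA_T`, there exist indices `h`, `l` with
`c_hh - k_min ≤ (s-1)·max_{j≠h}|c_hj|` and `k_max - c_ll ≤ (s-1)·max_{j≠l}|c_lj|`. -/
theorem stmt_11 {n m s : ℕ} (hs : 1 ≤ s) (hsm : s ≤ m)
    (A : Matrix (Fin n) (Fin m) ℝ)
    (C : Matrix (Fin m) (Fin m) ℝ) (hC : C = Aᵀ * A)
    (lmax lmin : Finset (Fin m) → ℝ)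
    (hlmax : ∀ T : Finset (Fin m), T.Nonempty →
      IsGreatest (Set.range
        (isHermitian_transpose_mul_self
          (A.submatrix id (fun i : {j // j ∈ T} => i.1))).eigenvalues) (lmax T))
    (hlmin : ∀ T : Finset (Fin m), T.Nonempty →
      IsLeast (Set.range
        (isHermitian_transpose_mul_self
          (A.submatrix id (fun i : {j // j ∈ T} => i.1))).eigenvalues) (lmin T))
    (kmax kmin : ℝ)
    (hkmax : IsGreatest {r : ℝ | ∃ T : Finset (Fin m), T.card = s ∧ r = lmax T} kmax)
    (hkmin : IsLeast {r : ℝ | ∃ T : Finset (Fin m), T.card = s ∧ r = lmin T} kmin)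
    (cmax : Fin m → ℝ)
    (hcmax_ub : ∀ i, ∀ j ≠ i, |C i j| ≤ cmax i)
    (hcmax_mem : ∀ i, ∃ j ≠ i, cmax i = |C i j|) :
    (∃ h : Fin m, C h h - kmin ≤ ((s : ℝ) - 1) * cmax h) ∧
    (∃ l : Fin m, kmax - C l l ≤ ((s : ℝ) - 1) * cmax l) := by
  constructor
  · obtain ⟨T, hT, hk⟩ := hkmin.1
    have hTne : T.Nonempty := Finset.card_pos.mp (hT ▸ hs)
    obtain ⟨h, hh⟩ := gersh_sub hs A C hC cmax hcmax_ub T hT kmin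
      (hk ▸ (hlmin T hTne).1)
    exact ⟨h, le_trans (by rw [abs_sub_comm]; exact le_abs_self _) hh⟩
  · obtain ⟨T, hT, hk⟩ := hkmax.1
    have hTne : T.Nonempty := Finset.card_pos.mp (hT ▸ hs)
    obtain ⟨l, hl⟩ := gersh_sub hs A C hC cmax hcmax_ub T hT kmax
      (hk ▸ (hlmax T hTne).1)
    exact ⟨l, le_trans (le_abs_self _) hl⟩
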